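/- For every natural number d ≥ 3 there exists exactly one real number x in the interval (0, 1] satisfying 1 − (1 − x/2)^d = x, and moreover this solution lies in the open interval (0, 1). -/

import Mathlib

/-- Uniqueness of roots of `t^d = 2t-1` in `[1/2, 1)` via strict convexity of `t^d`
(since `t = 1` is also a root, two roots below `1` would give three roots). -/
lemma aux_unique (d : ℕ) (hd : 3 ≤ d) :
    ∀ a b : ℝ, a ∈ Set.Ico (1/2 : ℝ) 1 → b ∈ Set.Ico (1/2 : ℝ) 1 →
      a ^ d = 2 * a - 1 → b ^ d = 2 * b - 1 → a = b := by
  have key : ∀ a b : ℝ, a ∈ Set.Ico (1/2 : ℝ) 1 → b ∈ Set.Ico (1/2 : ℝ) 1 →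
      a ^ d = 2 * a - 1 → b ^ d = 2 * b - 1 → a < b → False := by
    intro a b ha hb hfa hfb hab
    obtain ⟨ha0, ha1⟩ := ha
    obtain ⟨hb0, hb1⟩ := hb
    have h1a : (0:ℝ) < 1 - a := by linarith
    have hsc := strictConvexOn_pow (n := d) (by omega)
    have hμ : (0:ℝ) < (1 - b) / (1 - a) := by
      apply div_pos <;> linarith
    have hν : (0:ℝ) < (b - a) / (1 - a) := by
      apply div_pos <;> linarith
    have hsum : (1 - b) / (1 - a) + (b - a) / (1 - a) = 1 := by
      field_simp
      ring
    have hcomb : (1 - b) / (1 - a) * a + (b - a) / (1 - a) * (1:ℝ) = b := by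
      rw [div_mul_eq_mul_div, div_mul_eq_mul_div, ← add_div,
        div_eq_iff h1a.ne']
      ring
    have hlt := hsc.2 (Set.mem_Ici.2 (by linarith : (0:ℝ) ≤ a))
      (Set.mem_Ici.2 (by norm_num : (0:ℝ) ≤ 1)) (by linarith : a ≠ 1) hμ hν hsum
    simp only [smul_eq_mul, one_pow] at hlt
    rw [hcomb] at hlt
    rw [hfa, hfb] at hlt
    have : (1 - b) / (1 - a) * (2 * a - 1) + (b - a) / (1 - a) * 1 = 2 * b - 1 := by
      field_simp
      ring
    linarith [this ▸ hlt]
  intro a b ha hb hfa hfb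
  rcases lt_trichotomy a b with h | h | h
  · exact absurd (key a b ha hb hfa hfb h) (by simp)
  · exact h
  · exact absurd (key b a hb ha hfb hfa h) (by simp)

/-- Existence of a root of `t^d = 2t-1` in `(1/2, 4/5)` via IVT. -/
lemma aux_exists (d : ℕ) (hd : 3 ≤ d) :
    ∃ t : ℝ, t ∈ Set.Ioo (1/2 : ℝ) (4/5) ∧ t ^ d = 2 * t - 1 := by
  set f : ℝ → ℝ := fun t => t ^ d - (2 * t - 1) with hf
  have hcont : ContinuousOn f (Set.Icc (1/2 : ℝ) (4/5)) :=
    (Continuous.sub (continuous_pow d) (by continuity)).continuousOn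
  have h1 : 0 < f (1/2) := by
    simp only [hf]
    have : (0:ℝ) < (1/2:ℝ) ^ d := by positivity
    norm_num
  have h2 : f (4/5) < 0 := by
    have hle : (4/5 : ℝ) ^ d ≤ (4/5 : ℝ) ^ 3 :=
      pow_le_pow_of_le_one (by norm_num) (by norm_num) hd
    simp only [hf]
    norm_num at hle ⊢
    linarith
  have := intermediate_value_Ioo' (by norm_num : (1/2 : ℝ) ≤ 4/5) hcont
    (Set.mem_Ioo.2 ⟨h2, h1⟩)
  obtain ⟨t, ht, hft⟩ := this
  exact ⟨t, ht, by simp only [hf] at hft; linarith⟩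

/-- For every `d ≥ 3`, the equation `1-(1-x/2)^d = x` has exactly one solution in
`(0,1]`, and this solution lies in the open interval `(0,1)`. -/
theorem exists_unique_fixed_point (d : ℕ) (hd : 3 ≤ d) :
    (∃! x : ℝ, x ∈ Set.Ioc (0 : ℝ) 1 ∧ 1 - (1 - x / 2) ^ d = x) ∧
    (∀ x : ℝ, x ∈ Set.Ioc (0 : ℝ) 1 → 1 - (1 - x / 2) ^ d = x → x < 1) := by
  -- translate the equation for x to the equation for t = 1 - x/2
  have lt1 : ∀ x : ℝ, x ∈ Set.Ioc (0 : ℝ) 1 → 1 - (1 - x / 2) ^ d = x →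
      (1 - x/2) ∈ Set.Ico (1/2 : ℝ) 1 ∧ (1 - x/2) ^ d = 2 * (1 - x/2) - 1 := by
    intro x ⟨hx0, hx1⟩ heq
    constructor
    · constructor <;> [linarith; linarith]
    · linarith
  constructor
  · obtain ⟨t, ⟨ht1, ht2⟩, hteq⟩ := aux_exists d hd
    refine ⟨2 * (1 - t), ⟨⟨by linarith, by linarith⟩, ?_⟩, ?_⟩
    · have : 1 - 2 * (1 - t) / 2 = t := by ring
      rw [this]; linarith
    · intro y ⟨hy, hyeq⟩
      have h := lt1 y hy hyeq
      have := aux_unique d hd (1 - y/2) t h.1 ⟨by linarith, by linarith⟩ h.2 hteq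
      linarith
  · intro x hx heq
    obtain ⟨⟨ht1, ht2⟩, hteq⟩ := lt1 x hx heq
    by_contra hnot
    have hx1 : x = 1 := le_antisymm hx.2 (not_lt.1 hnot)
    rw [hx1] at hteq
    norm_num at hteq
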